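/- Let Ω_T ⊂ ℝ^{n+1} be a space-time cylinder with 0 < |Ω_T| < ∞, 0 ≤ γ < 1, 0 < r < ∞, and f ∈ L^r_loc(Ω_T). Then lim_{q→∞} ||f||_{PJN^+_{q,γ,r}(Ω_T)} = ||f||_{PBMO^+_{γ,r}(Ω_T)} (in [0, ∞]). -/

import Mathlib

open MeasureTheory ENNReal Set Filter

noncomputable section

/-- A parabolic rectangle in `ℝⁿ × ℝ`, determined by its center `(x, t)` and
edge length `L > 0`. -/
structure ParRect (n : ℕ) where
  x : Fin n → ℝ
  t : ℝ
  L : ℝ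
  hL : 0 < L

variable {n : ℕ}

/-- The spatial cube `Q(x, L)`. -/
def ParRect.base (R : ParRect n) : Set (Fin n → ℝ) :=
  {y | ∀ i, |y i - R.x i| ≤ R.L}

/-- The parabolic rectangle `R = Q(x,L) × (t - L^p, t + L^p)`. -/
def ParRect.rect (p : ℝ) (R : ParRect n) : Set ((Fin n → ℝ) × ℝ) :=
  R.base ×ˢ Ioo (R.t - R.L ^ p) (R.t + R.L ^ p)

/-- The upper part `R⁺(γ) = Q(x,L) × (t + γL^p, t + L^p)`. -/
def ParRect.upper (p γ : ℝ) (R : ParRect n) : Set ((Fin n → ℝ) × ℝ) :=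
  R.base ×ˢ Ioo (R.t + γ * R.L ^ p) (R.t + R.L ^ p)

/-- The lower part `R⁻(γ) = Q(x,L) × (t - L^p, t - γL^p)`. -/
def ParRect.lower (p γ : ℝ) (R : ParRect n) : Set ((Fin n → ℝ) × ℝ) :=
  R.base ×ˢ Ioo (R.t - R.L ^ p) (R.t - γ * R.L ^ p)

/-- Positive part of a real number. -/
def posPart' (x : ℝ) : ℝ := max x 0

/-- The parabolic `r`-oscillation
`inf_c ( ⨍_{R⁺(γ)} (f-c)₊^r + ⨍_{R⁻(γ)} (f-c)₋^r )` of `f` on `R`. -/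
def osc (p γ r : ℝ) (f : (Fin n → ℝ) × ℝ → ℝ) (R : ParRect n) : ℝ≥0∞ :=
  ⨅ c : ℝ,
    ((∫⁻ z in R.upper p γ, ENNReal.ofReal (posPart' (f z - c) ^ r)) / volume (R.upper p γ) +
     (∫⁻ z in R.lower p γ, ENNReal.ofReal (posPart' (c - f z) ^ r)) / volume (R.lower p γ))

/-- The `q`-th power of the parabolic John–Nirenberg norm `‖f‖_{PJN⁺_{q,γ,r}(Ω)}^q`:
the supremum over countable pairwise disjoint collections of parabolic subrectangles of `Ω` of
`Σᵢ |Rᵢ⁺(γ)| · osc(f, Rᵢ)^{q/r}`. -/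
def pjnQ (p q γ r : ℝ) (f : (Fin n → ℝ) × ℝ → ℝ) (Ω : Set ((Fin n → ℝ) × ℝ)) : ℝ≥0∞ :=
  ⨆ (Rs : ℕ → ParRect n) (_ : ∀ i, (Rs i).rect p ⊆ Ω)
    (_ : Pairwise fun i j => Disjoint ((Rs i).rect p) ((Rs j).rect p)),
    ∑' i, volume ((Rs i).upper p γ) * osc p γ r f (Rs i) ^ (q / r)

/-- The parabolic John–Nirenberg norm `‖f‖_{PJN⁺_{q,γ,r}(Ω)}`. -/
def pjn (p q γ r : ℝ) (f : (Fin n → ℝ) × ℝ → ℝ) (Ω : Set ((Fin n → ℝ) × ℝ)) : ℝ≥0∞ :=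
  pjnQ p q γ r f Ω ^ (1 / q)

/-- The parabolic BMO norm `‖f‖_{PBMO⁺_{γ,r}(Ω)}`. -/
def pbmo (p γ r : ℝ) (f : (Fin n → ℝ) × ℝ → ℝ) (Ω : Set ((Fin n → ℝ) × ℝ)) : ℝ≥0∞ :=
  ⨆ (R : ParRect n) (_ : R.rect p ⊆ Ω), osc p γ r f R ^ (1 / r)

/-! ### Auxiliary lemmas -/

namespace ParRect

lemma base_eq (R : ParRect n) :
    R.base = Set.pi Set.univ (fun i => Icc (R.x i - R.L) (R.x i + R.L)) := by
  ext y
  simp only [ParRect.base, mem_setOf_eq, Set.mem_pi, Set.mem_univ, forall_true_left,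
    mem_Icc, abs_le]
  constructor <;> intro h i <;> obtain ⟨h1, h2⟩ := h i <;> constructor <;> linarith

/-- The open spatial cube. -/
def oBase (R : ParRect n) : Set (Fin n → ℝ) :=
  Set.pi Set.univ (fun i => Ioo (R.x i - R.L) (R.x i + R.L))

lemma oBase_subset_base (R : ParRect n) : R.oBase ⊆ R.base := by
  rw [base_eq]
  exact Set.pi_mono fun i _ => Ioo_subset_Icc_self

lemma measurableSet_base (R : ParRect n) : MeasurableSet R.base := by
  rw [base_eq]; exact MeasurableSet.univ_pi fun i => measurableSet_Icc

lemma measurableSet_oBase (R : ParRect n) : MeasurableSet R.oBase :=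
  MeasurableSet.univ_pi fun i => measurableSet_Ioo

lemma volume_base (R : ParRect n) :
    volume R.base = ENNReal.ofReal (2 * R.L) ^ n := by
  rw [base_eq, volume_pi_pi]
  simp only [Real.volume_Icc]
  have h : ∀ i : Fin n, ENNReal.ofReal (R.x i + R.L - (R.x i - R.L)) = ENNReal.ofReal (2 * R.L) :=
    fun i => by congr 1; ring
  simp only [h, Finset.prod_const, Finset.card_univ, Fintype.card_fin]

lemma volume_oBase (R : ParRect n) :
    volume R.oBase = ENNReal.ofReal (2 * R.L) ^ n := by
  rw [oBase, volume_pi_pi]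
  simp only [Real.volume_Ioo]
  have h : ∀ i : Fin n, ENNReal.ofReal (R.x i + R.L - (R.x i - R.L)) = ENNReal.ofReal (2 * R.L) :=
    fun i => by congr 1; ring
  simp only [h, Finset.prod_const, Finset.card_univ, Fintype.card_fin]

lemma volume_base_pos (R : ParRect n) : 0 < volume R.base := by
  rw [volume_base]
  exact ENNReal.pow_pos (ENNReal.ofReal_pos.2 (by linarith [R.hL])) n

lemma volume_base_ne_top (R : ParRect n) : volume R.base ≠ ⊤ := by
  rw [volume_base]
  exact pow_ne_top ofReal_ne_top

lemma base_diff_oBase_null (R : ParRect n) : volume (R.base \ R.oBase) = 0 := by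
  have h := measure_diff (R.oBase_subset_base) R.measurableSet_oBase.nullMeasurableSet
    (by rw [volume_oBase]; exact pow_ne_top ofReal_ne_top)
  rw [h, volume_base, volume_oBase, tsub_self]

lemma measurableSet_upper (p γ : ℝ) (R : ParRect n) : MeasurableSet (R.upper p γ) :=
  R.measurableSet_base.prod measurableSet_Ioo

lemma measurableSet_lower (p γ : ℝ) (R : ParRect n) : MeasurableSet (R.lower p γ) :=
  R.measurableSet_base.prod measurableSet_Ioo

lemma volume_upper (p γ : ℝ) (R : ParRect n) :
    volume (R.upper p γ)
      = ENNReal.ofReal (2 * R.L) ^ n * ENNReal.ofReal ((1 - γ) * R.L ^ p) := by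
  rw [ParRect.upper]
  rw [show (volume : Measure ((Fin n → ℝ) × ℝ)) = (volume : Measure (Fin n → ℝ)).prod volume
    from MeasureTheory.Measure.volume_eq_prod _ _]
  rw [Measure.prod_prod, volume_base, Real.volume_Ioo]
  congr 2
  ring

lemma volume_lower (p γ : ℝ) (R : ParRect n) :
    volume (R.lower p γ)
      = ENNReal.ofReal (2 * R.L) ^ n * ENNReal.ofReal ((1 - γ) * R.L ^ p) := by
  rw [ParRect.lower]
  rw [show (volume : Measure ((Fin n → ℝ) × ℝ)) = (volume : Measure (Fin n → ℝ)).prod volume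
    from MeasureTheory.Measure.volume_eq_prod _ _]
  rw [Measure.prod_prod, volume_base, Real.volume_Ioo]
  congr 2
  ring

/-- The open upper part. -/
def oUpper (p γ : ℝ) (R : ParRect n) : Set ((Fin n → ℝ) × ℝ) :=
  R.oBase ×ˢ Ioo (R.t + γ * R.L ^ p) (R.t + R.L ^ p)

/-- The open lower part. -/
def oLower (p γ : ℝ) (R : ParRect n) : Set ((Fin n → ℝ) × ℝ) :=
  R.oBase ×ˢ Ioo (R.t - R.L ^ p) (R.t - γ * R.L ^ p)

lemma oUpper_subset (p γ : ℝ) (R : ParRect n) : R.oUpper p γ ⊆ R.upper p γ :=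
  Set.prod_mono R.oBase_subset_base subset_rfl

lemma oLower_subset (p γ : ℝ) (R : ParRect n) : R.oLower p γ ⊆ R.lower p γ :=
  Set.prod_mono R.oBase_subset_base subset_rfl

lemma measurableSet_oUpper (p γ : ℝ) (R : ParRect n) : MeasurableSet (R.oUpper p γ) :=
  R.measurableSet_oBase.prod measurableSet_Ioo

lemma measurableSet_oLower (p γ : ℝ) (R : ParRect n) : MeasurableSet (R.oLower p γ) :=
  R.measurableSet_oBase.prod measurableSet_Ioo

lemma volume_oUpper (p γ : ℝ) (R : ParRect n) :
    volume (R.oUpper p γ)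
      = ENNReal.ofReal (2 * R.L) ^ n * ENNReal.ofReal ((1 - γ) * R.L ^ p) := by
  rw [oUpper]
  rw [show (volume : Measure ((Fin n → ℝ) × ℝ)) = (volume : Measure (Fin n → ℝ)).prod volume
    from MeasureTheory.Measure.volume_eq_prod _ _]
  rw [Measure.prod_prod, volume_oBase, Real.volume_Ioo]
  congr 2
  ring

lemma volume_oLower (p γ : ℝ) (R : ParRect n) :
    volume (R.oLower p γ)
      = ENNReal.ofReal (2 * R.L) ^ n * ENNReal.ofReal ((1 - γ) * R.L ^ p) := by
  rw [oLower]
  rw [show (volume : Measure ((Fin n → ℝ) × ℝ)) = (volume : Measure (Fin n → ℝ)).prod volume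
    from MeasureTheory.Measure.volume_eq_prod _ _]
  rw [Measure.prod_prod, volume_oBase, Real.volume_Ioo]
  congr 2
  ring

lemma upper_ae_oUpper (p γ : ℝ) (R : ParRect n) :
    R.upper p γ =ᵐ[volume] R.oUpper p γ := by
  rw [MeasureTheory.ae_eq_set]
  constructor
  · have hsub : R.upper p γ \ R.oUpper p γ
        ⊆ (R.base \ R.oBase) ×ˢ Ioo (R.t + γ * R.L ^ p) (R.t + R.L ^ p) := by
      rintro ⟨y, s⟩ ⟨⟨hy, hs⟩, hns⟩
      exact ⟨⟨hy, fun h => hns ⟨h, hs⟩⟩, hs⟩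
    refine measure_mono_null hsub ?_
    rw [show (volume : Measure ((Fin n → ℝ) × ℝ)) = (volume : Measure (Fin n → ℝ)).prod volume
      from MeasureTheory.Measure.volume_eq_prod _ _]
    rw [Measure.prod_prod, base_diff_oBase_null, zero_mul]
  · rw [Set.diff_eq_empty.mpr (R.oUpper_subset p γ)]
    exact measure_empty

lemma lower_ae_oLower (p γ : ℝ) (R : ParRect n) :
    R.lower p γ =ᵐ[volume] R.oLower p γ := by
  rw [MeasureTheory.ae_eq_set]
  constructor
  · have hsub : R.lower p γ \ R.oLower p γ
        ⊆ (R.base \ R.oBase) ×ˢ Ioo (R.t - R.L ^ p) (R.t - γ * R.L ^ p) := by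
      rintro ⟨y, s⟩ ⟨⟨hy, hs⟩, hns⟩
      exact ⟨⟨hy, fun h => hns ⟨h, hs⟩⟩, hs⟩
    refine measure_mono_null hsub ?_
    rw [show (volume : Measure ((Fin n → ℝ) × ℝ)) = (volume : Measure (Fin n → ℝ)).prod volume
      from MeasureTheory.Measure.volume_eq_prod _ _]
    rw [Measure.prod_prod, base_diff_oBase_null, zero_mul]
  · rw [Set.diff_eq_empty.mpr (R.oLower_subset p γ)]
    exact measure_empty

lemma volume_upper_pos (p γ : ℝ) (hγ1 : γ < 1) (R : ParRect n) :
    0 < volume (R.upper p γ) := by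
  rw [volume_upper]
  exact ENNReal.mul_pos (ENNReal.pow_pos (ENNReal.ofReal_pos.2 (by linarith [R.hL])) n).ne'
    (ENNReal.ofReal_pos.2 (mul_pos (by linarith) (Real.rpow_pos_of_pos R.hL p))).ne'

lemma volume_upper_ne_top (p γ : ℝ) (R : ParRect n) : volume (R.upper p γ) ≠ ⊤ := by
  rw [volume_upper]
  exact ENNReal.mul_ne_top (pow_ne_top ofReal_ne_top) ofReal_ne_top

lemma volume_lower_pos (p γ : ℝ) (hγ1 : γ < 1) (R : ParRect n) :
    0 < volume (R.lower p γ) := by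
  rw [volume_lower, ← volume_upper p γ R]
  exact volume_upper_pos p γ hγ1 R

lemma volume_lower_ne_top (p γ : ℝ) (R : ParRect n) : volume (R.lower p γ) ≠ ⊤ := by
  rw [volume_lower, ← volume_upper p γ R]
  exact volume_upper_ne_top p γ R

lemma upper_subset_rect (p γ : ℝ) (hγ0 : 0 ≤ γ) (R : ParRect n) :
    R.upper p γ ⊆ R.rect p := by
  apply Set.prod_mono subset_rfl
  apply Ioo_subset_Ioo _ le_rfl
  have := Real.rpow_pos_of_pos R.hL p
  nlinarith

lemma lower_subset_rect (p γ : ℝ) (hγ0 : 0 ≤ γ) (R : ParRect n) :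
    R.lower p γ ⊆ R.rect p := by
  apply Set.prod_mono subset_rfl
  apply Ioo_subset_Ioo le_rfl
  have := Real.rpow_pos_of_pos R.hL p
  nlinarith

lemma base_mono {S R : ParRect n} (hx : S.x = R.x) (hL : S.L ≤ R.L) : S.base ⊆ R.base :=
  fun y hy i => le_trans (by rw [← hx]; exact hy i) hL

end ParRect

lemma disjoint_prod_of_snd {α β : Type*} {A B : Set α} {I J : Set β} (h : Disjoint I J) :
    Disjoint (A ×ˢ I) (B ×ˢ J) := by
  rw [Set.disjoint_left]
  rintro ⟨y, s⟩ ⟨_, hs⟩ ⟨_, hs'⟩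
  exact Set.disjoint_left.mp h hs hs'

lemma disjoint_Ioo_of_le {a b c d : ℝ} (h : b ≤ c) : Disjoint (Ioo a b) (Ioo c d) := by
  rw [Set.disjoint_left]
  intro z hz hz'
  exact absurd (hz.2.trans_le h) (not_lt.mpr hz'.1.le)


lemma master_fatou {α : Type*} [MeasurableSpace α] (μ : Measure α)
    (w1 w2 : ℝ≥0∞) (hw1 : w1 ≠ ⊤) (hw2 : w2 ≠ ⊤)
    (E1 E2 : Set α) (hE1 : MeasurableSet E1) (hE2 : MeasurableSet E2)
    (A1 A2 : ℕ → Set α) (hA1 : ∀ j, MeasurableSet (A1 j)) (hA2 : ∀ j, MeasurableSet (A2 j))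
    (g1 g2 : ℕ → α → ℝ≥0∞) (hg1 : ∀ j, Measurable (g1 j)) (hg2 : ∀ j, Measurable (g2 j))
    (H1 H2 : α → ℝ≥0∞)
    (h1 : ∀ z ∈ E1, (∀ᶠ j in atTop, z ∈ A1 j) ∧
      Tendsto (fun j => g1 j z) atTop (nhds (H1 z)))
    (h2 : ∀ z ∈ E2, (∀ᶠ j in atTop, z ∈ A2 j) ∧
      Tendsto (fun j => g2 j z) atTop (nhds (H2 z))) :
    (∫⁻ z, (w1 * E1.indicator H1 z + w2 * E2.indicator H2 z) ∂μ)
      ≤ liminf (fun j =>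
          ∫⁻ z, (w1 * (A1 j).indicator (g1 j) z + w2 * (A2 j).indicator (g2 j) z) ∂μ) atTop := by
  set F : ℕ → α → ℝ≥0∞ := fun j z =>
    w1 * (E1 ∩ A1 j).indicator (g1 j) z + w2 * (E2 ∩ A2 j).indicator (g2 j) z with hF
  have hFmeas : ∀ j, Measurable (F j) := fun j =>
    (((hg1 j).indicator (hE1.inter (hA1 j))).const_mul w1).add
      (((hg2 j).indicator (hE2.inter (hA2 j))).const_mul w2)
  have hptw : ∀ z, Tendsto (fun j => F j z) atTop
      (nhds (w1 * E1.indicator H1 z + w2 * E2.indicator H2 z)) := by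
    intro z
    apply Filter.Tendsto.add
    · by_cases hz : z ∈ E1
      · rw [Set.indicator_of_mem hz]
        have hev : ∀ᶠ j in atTop, w1 * g1 j z = w1 * (E1 ∩ A1 j).indicator (g1 j) z := by
          filter_upwards [(h1 z hz).1] with j hj
          rw [Set.indicator_of_mem (Set.mem_inter hz hj)]
        exact Tendsto.congr' hev (ENNReal.Tendsto.const_mul (h1 z hz).2 (Or.inr hw1))
      · rw [Set.indicator_of_notMem hz, mul_zero]
        have hc : ∀ j, w1 * (E1 ∩ A1 j).indicator (g1 j) z = 0 := fun j => by
          rw [Set.indicator_of_notMem (fun h => hz h.1), mul_zero]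
        simpa [hc] using (tendsto_const_nhds : Tendsto (fun _ : ℕ => (0 : ℝ≥0∞)) atTop _)
    · by_cases hz : z ∈ E2
      · rw [Set.indicator_of_mem hz]
        have hev : ∀ᶠ j in atTop, w2 * g2 j z = w2 * (E2 ∩ A2 j).indicator (g2 j) z := by
          filter_upwards [(h2 z hz).1] with j hj
          rw [Set.indicator_of_mem (Set.mem_inter hz hj)]
        exact Tendsto.congr' hev (ENNReal.Tendsto.const_mul (h2 z hz).2 (Or.inr hw2))
      · rw [Set.indicator_of_notMem hz, mul_zero]
        have hc : ∀ j, w2 * (E2 ∩ A2 j).indicator (g2 j) z = 0 := fun j => by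
          rw [Set.indicator_of_notMem (fun h => hz h.1), mul_zero]
        simpa [hc] using (tendsto_const_nhds : Tendsto (fun _ : ℕ => (0 : ℝ≥0∞)) atTop _)
  calc (∫⁻ z, (w1 * E1.indicator H1 z + w2 * E2.indicator H2 z) ∂μ)
      = ∫⁻ z, liminf (fun j => F j z) atTop ∂μ :=
        lintegral_congr fun z => ((hptw z).liminf_eq).symm
    _ ≤ liminf (fun j => ∫⁻ z, F j z ∂μ) atTop := lintegral_liminf_le hFmeas
    _ ≤ liminf (fun j =>
          ∫⁻ z, (w1 * (A1 j).indicator (g1 j) z + w2 * (A2 j).indicator (g2 j) z) ∂μ) atTop := by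
        refine Filter.liminf_le_liminf (Filter.Eventually.of_forall fun j => ?_)
        apply lintegral_mono
        intro z
        exact add_le_add
          (mul_le_mul_right
            (Set.indicator_le_indicator_of_subset Set.inter_subset_right (fun _ => zero_le) z) w1)
          (mul_le_mul_right
            (Set.indicator_le_indicator_of_subset Set.inter_subset_right (fun _ => zero_le) z) w2)

set_option maxHeartbeats 1000000 in
/-- A single strictly-shrunk rectangle contributes to the JN functional:
placing countably many tiny disjoint companion rectangles above it. -/
lemma single_le_pjnQ {n : ℕ} {p : ℝ} (q γ r : ℝ) (hp0 : 0 < p)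
    (f : (Fin n → ℝ) × ℝ → ℝ) {Ωs : Set ((Fin n → ℝ) × ℝ)}
    {S R : ParRect n} (hx : S.x = R.x) (ht : S.t = R.t) (hLlt : S.L < R.L)
    (hR : R.rect p ⊆ Ωs) :
    volume (S.upper p γ) * osc p γ r f S ^ (q / r) ≤ pjnQ p q γ r f Ωs := by
  set d : ℝ := R.L ^ p - S.L ^ p with hd_def
  have hd : 0 < d := sub_pos.2 (Real.rpow_lt_rpow S.hL.le hLlt hp0)
  set a : ℝ := R.t + S.L ^ p with ha_def
  set dk : ℕ → ℝ := fun k => d / 2 ^ (k + 2) with hdk_def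
  have hdk : ∀ k, 0 < dk k := fun k => div_pos hd (by positivity)
  have hSp_pos : 0 < S.L ^ p := Real.rpow_pos_of_pos S.hL p
  have hRp_pos : 0 < R.L ^ p := Real.rpow_pos_of_pos R.hL p
  set ε : ℕ → ℝ := fun k => min ((dk k) ^ (1 / p)) R.L with hε_def
  have hε : ∀ k, 0 < ε k := fun k => lt_min (Real.rpow_pos_of_pos (hdk k) _) R.hL
  set C : ℕ → ParRect n := fun k => ⟨R.x, a + 3 * dk k, ε k, hε k⟩ with hC_def
  have hεp : ∀ k, (ε k) ^ p ≤ dk k := by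
    intro k
    calc (ε k) ^ p ≤ ((dk k) ^ (1 / p)) ^ p :=
          Real.rpow_le_rpow (hε k).le (min_le_left _ _) hp0.le
      _ = dk k := by
          rw [← Real.rpow_mul (hdk k).le, one_div, inv_mul_cancel₀ hp0.ne', Real.rpow_one]
  have hCrect : ∀ k, (C k).rect p ⊆ R.base ×ˢ Ioo (a + 2 * dk k) (a + 4 * dk k) := by
    intro k
    apply Set.prod_mono
    · exact ParRect.base_mono rfl (min_le_right _ _)
    · apply Ioo_subset_Ioo
      · have := hεp k; simp only [hC_def]; linarith
      · have := hεp k; simp only [hC_def]; linarith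
  have h4 : ∀ k, 4 * dk k ≤ d := by
    intro k
    have h2 : (4 : ℝ) ≤ 2 ^ (k + 2) := by
      calc (4 : ℝ) = 2 ^ 2 := by norm_num
        _ ≤ 2 ^ (k + 2) := pow_le_pow_right₀ one_le_two (by omega)
    have h3 : (0 : ℝ) < 2 ^ (k + 2) := by positivity
    have he : dk k = d / 2 ^ (k + 2) := rfl
    rw [he, mul_div_assoc', div_le_iff₀ h3]
    nlinarith
  have hIoo_sub : ∀ k, Ioo (a + 2 * dk k) (a + 4 * dk k) ⊆ Ioo (R.t - R.L ^ p) (R.t + R.L ^ p) := by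
    intro k
    apply Ioo_subset_Ioo
    · have := hdk k; simp only [ha_def]; linarith
    · have := h4 k; simp only [ha_def, hd_def] at *; linarith
  have hCsub : ∀ k, (C k).rect p ⊆ R.rect p := by
    intro k
    refine (hCrect k).trans (Set.prod_mono subset_rfl (hIoo_sub k))
  have hSp_le : S.L ^ p ≤ R.L ^ p := Real.rpow_le_rpow S.hL.le hLlt.le hp0.le
  have hSsub : S.rect p ⊆ R.rect p := by
    apply Set.prod_mono (ParRect.base_mono hx hLlt.le)
    apply Ioo_subset_Ioo <;> rw [ht] <;> linarith
  have hdisjC : ∀ k j, k < j → Disjoint ((C k).rect p) ((C j).rect p) := by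
    intro k j hkj
    refine Set.disjoint_of_subset (hCrect k) (hCrect j) ?_
    apply (disjoint_prod_of_snd _).symm
    apply disjoint_Ioo_of_le
    -- a + 4 * dk j ≤ a + 2 * dk k
    have h1 : (2:ℝ) ^ (j + 2) = 4 * 2 ^ j := by rw [pow_add]; ring
    have h2 : (2:ℝ) ^ (k + 2) = 2 * 2 ^ (k + 1) := by rw [pow_add, pow_add]; ring
    have h3 : (2:ℝ) ^ (k + 1) ≤ 2 ^ j := pow_le_pow_right₀ one_le_two (by omega)
    have h4j : 4 * dk j = d / 2 ^ j := by
      rw [hdk_def]; field_simp [h1]; ring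
    have h2k : 2 * dk k = d / 2 ^ (k + 1) := by
      rw [hdk_def]; field_simp [h2]; ring
    have : d / 2 ^ j ≤ d / 2 ^ (k + 1) :=
      div_le_div_of_nonneg_left hd.le (by positivity) h3
    linarith
  have hdisjS : ∀ k, Disjoint (S.rect p) ((C k).rect p) := by
    intro k
    refine Set.disjoint_of_subset subset_rfl (hCrect k) ?_
    apply disjoint_prod_of_snd
    apply disjoint_Ioo_of_le
    rw [ht]
    have := hdk k
    simp only [ha_def]
    linarith
  set Rs : ℕ → ParRect n := fun i => match i with
    | 0 => S
    | Nat.succ k => C k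
    with hRs_def
  have hfam1 : ∀ i, (Rs i).rect p ⊆ Ωs := by
    intro i
    match i with
    | 0 => exact hSsub.trans hR
    | Nat.succ k => exact (hCsub k).trans hR
  have hfam2 : Pairwise fun i j => Disjoint ((Rs i).rect p) ((Rs j).rect p) := by
    intro i j hij
    match i, j with
    | 0, 0 => exact absurd rfl hij
    | 0, Nat.succ k => exact hdisjS k
    | Nat.succ k, 0 => exact (hdisjS k).symm
    | Nat.succ k, Nat.succ l =>
      have hkl : k ≠ l := fun h => hij (congrArg Nat.succ h)
      exact (lt_or_gt_of_ne hkl).elim (fun h => hdisjC k l h) (fun h => (hdisjC l k h).symm)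
  have hstep : (∑' i, volume ((Rs i).upper p γ) * osc p γ r f (Rs i) ^ (q / r))
      ≤ pjnQ p q γ r f Ωs := by
    have h1 : (∑' i, volume ((Rs i).upper p γ) * osc p γ r f (Rs i) ^ (q / r))
        ≤ ⨆ (_ : ∀ i, (Rs i).rect p ⊆ Ωs)
            (_ : Pairwise fun i j => Disjoint ((Rs i).rect p) ((Rs j).rect p)),
            ∑' i, volume ((Rs i).upper p γ) * osc p γ r f (Rs i) ^ (q / r) := by
      rw [iSup_pos hfam1, iSup_pos hfam2]
    exact h1.trans (le_iSup (fun Rs => ⨆ (_ : ∀ i, (Rs i).rect p ⊆ Ωs)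
      (_ : Pairwise fun i j => Disjoint ((Rs i).rect p) ((Rs j).rect p)),
      ∑' i, volume ((Rs i).upper p γ) * osc p γ r f (Rs i) ^ (q / r)) Rs)
  calc volume (S.upper p γ) * osc p γ r f S ^ (q / r)
      = volume ((Rs 0).upper p γ) * osc p γ r f (Rs 0) ^ (q / r) := rfl
    _ ≤ ∑' i, volume ((Rs i).upper p γ) * osc p γ r f (Rs i) ^ (q / r) := ENNReal.le_tsum 0
    _ ≤ pjnQ p q γ r f Ωs := hstep

lemma ParRect.volume_oUpper_pos (p γ : ℝ) (hγ1 : γ < 1) (R : ParRect n) :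
    0 < volume (R.oUpper p γ) := by
  rw [ParRect.volume_oUpper]
  exact ENNReal.mul_pos (ENNReal.pow_pos (ENNReal.ofReal_pos.2 (by linarith [R.hL])) n).ne'
    (ENNReal.ofReal_pos.2 (mul_pos (by linarith) (Real.rpow_pos_of_pos R.hL p))).ne'

lemma ParRect.volume_oLower_pos (p γ : ℝ) (hγ1 : γ < 1) (R : ParRect n) :
    0 < volume (R.oLower p γ) := by
  rw [ParRect.volume_oLower, ← ParRect.volume_oUpper p γ R]
  exact ParRect.volume_oUpper_pos p γ hγ1 R

set_option maxHeartbeats 2000000 in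
/-- Continuity of the oscillation under interior approximation by shrunken rectangles. -/
lemma osc_le_iSup_shrink {n : ℕ} {p γ r : ℝ} (hp : 1 < p) (hγ0 : 0 ≤ γ) (hγ1 : γ < 1)
    (hr : 0 < r) (f : (Fin n → ℝ) × ℝ → ℝ) (hf : Measurable f)
    (R : ParRect n) (S : ℕ → ParRect n)
    (hx : ∀ m, (S m).x = R.x) (ht : ∀ m, (S m).t = R.t)
    (hLle : ∀ m, (S m).L ≤ R.L)
    (hLt : Tendsto (fun m => (S m).L) atTop (nhds R.L)) :
    osc p γ r f R ≤ ⨆ m, osc p γ r f (S m) := by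
  have hp0 : (0:ℝ) < p := lt_trans one_pos hp
  by_contra hC
  push_neg at hC
  obtain ⟨B', hB1, hB2⟩ := exists_between hC
  have hB't : B' ≠ ⊤ := hB2.ne_top
  have hc0 : ∀ m, ∃ cm : ℝ,
      (∫⁻ z in (S m).upper p γ, ENNReal.ofReal (posPart' (f z - cm) ^ r)) / volume ((S m).upper p γ)
      + (∫⁻ z in (S m).lower p γ, ENNReal.ofReal (posPart' (cm - f z) ^ r)) / volume ((S m).lower p γ)
        < B' := by
    intro m
    have h1 : osc p γ r f (S m) < B' :=
      lt_of_le_of_lt (le_iSup (fun m => osc p γ r f (S m)) m) hB1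
    rw [osc] at h1
    exact iInf_lt_iff.mp h1
  choose c hc using hc0
  have hv1_pos := R.volume_upper_pos p γ hγ1
  have hv1_top := R.volume_upper_ne_top p γ
  have hv2_pos := R.volume_lower_pos p γ hγ1
  have hv2_top := R.volume_lower_ne_top p γ
  set w1 := (volume (R.upper p γ))⁻¹ with hw1
  set w2 := (volume (R.lower p γ))⁻¹ with hw2
  have hw1t : w1 ≠ ⊤ := ENNReal.inv_ne_top.mpr hv1_pos.ne'
  have hw2t : w2 ≠ ⊤ := ENNReal.inv_ne_top.mpr hv2_pos.ne'
  have hw1_0 : w1 ≠ 0 := ENNReal.inv_ne_zero.mpr hv1_top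
  have hw2_0 : w2 ≠ 0 := ENNReal.inv_ne_zero.mpr hv2_top
  have hvu : ∀ m, volume ((S m).upper p γ) ≤ volume (R.upper p γ) := by
    intro m
    rw [ParRect.volume_upper, ParRect.volume_upper]
    have h1 : (2:ℝ) * (S m).L ≤ 2 * R.L := by linarith [hLle m]
    have h2 : (1 - γ) * (S m).L ^ p ≤ (1 - γ) * R.L ^ p :=
      mul_le_mul_of_nonneg_left (Real.rpow_le_rpow (S m).hL.le (hLle m) hp0.le) (by linarith)
    exact mul_le_mul' (pow_le_pow_left₀ zero_le (ENNReal.ofReal_le_ofReal h1) n)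
      (ENNReal.ofReal_le_ofReal h2)
  have hvl : ∀ m, volume ((S m).lower p γ) ≤ volume (R.lower p γ) := by
    intro m
    rw [ParRect.volume_lower, ParRect.volume_lower]
    have h1 : (2:ℝ) * (S m).L ≤ 2 * R.L := by linarith [hLle m]
    have h2 : (1 - γ) * (S m).L ^ p ≤ (1 - γ) * R.L ^ p :=
      mul_le_mul_of_nonneg_left (Real.rpow_le_rpow (S m).hL.le (hLle m) hp0.le) (by linarith)
    exact mul_le_mul' (pow_le_pow_left₀ zero_le (ENNReal.ofReal_le_ofReal h1) n)
      (ENNReal.ofReal_le_ofReal h2)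
  have hmeas1 : ∀ cm : ℝ, Measurable fun z => ENNReal.ofReal (posPart' (f z - cm) ^ r) := by
    intro cm
    simp only [posPart']
    exact (((hf.sub measurable_const).max measurable_const).pow measurable_const).ennreal_ofReal
  have hmeas2 : ∀ cm : ℝ, Measurable fun z => ENNReal.ofReal (posPart' (cm - f z) ^ r) := by
    intro cm
    simp only [posPart']
    exact (((measurable_const.sub hf).max measurable_const).pow measurable_const).ennreal_ofReal
  have hJ : ∀ m,
      (∫⁻ z, (w1 * ((S m).upper p γ).indicator
          (fun z => ENNReal.ofReal (posPart' (f z - c m) ^ r)) z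
        + w2 * ((S m).lower p γ).indicator
          (fun z => ENNReal.ofReal (posPart' (c m - f z) ^ r)) z)) ≤ B' := by
    intro m
    rw [lintegral_add_left
        (((hmeas1 (c m)).indicator ((S m).measurableSet_upper p γ)).const_mul w1),
      lintegral_const_mul w1 ((hmeas1 (c m)).indicator ((S m).measurableSet_upper p γ)),
      lintegral_const_mul w2 ((hmeas2 (c m)).indicator ((S m).measurableSet_lower p γ)),
      lintegral_indicator ((S m).measurableSet_upper p γ) _,
      lintegral_indicator ((S m).measurableSet_lower p γ) _]
    refine le_trans (add_le_add ?_ ?_) (hc m).le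
    · rw [hw1, ← ENNReal.div_eq_inv_mul]
      exact ENNReal.div_le_div_left (hvu m) _
    · rw [hw2, ← ENNReal.div_eq_inv_mul]
      exact ENNReal.div_le_div_left (hvl m) _
  have hLp_t : Tendsto (fun m => (S m).L ^ p) atTop (nhds (R.L ^ p)) :=
    ((Real.continuousAt_rpow_const R.L p (Or.inl R.hL.ne')).tendsto).comp hLt
  have hLp_le : ∀ m, (S m).L ^ p ≤ R.L ^ p :=
    fun m => Real.rpow_le_rpow (S m).hL.le (hLle m) hp0.le
  have hmemU : ∀ z ∈ R.oUpper p γ, ∀ᶠ m in atTop, z ∈ (S m).upper p γ := by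
    rintro ⟨y, s⟩ hz
    obtain ⟨hy, hs⟩ := hz
    obtain ⟨hs1, hs2⟩ := hs
    have hbase : ∀ᶠ m in atTop, ∀ i, |y i - (S m).x i| ≤ (S m).L := by
      rw [eventually_all]
      intro i
      have h2 := hy i (mem_univ i)
      rw [mem_Ioo] at h2
      have h1 : |y i - R.x i| < R.L := by
        rw [abs_lt]; constructor <;> linarith [h2.1, h2.2]
      filter_upwards [hLt.eventually_const_lt h1] with m hm
      rw [hx m]
      exact hm.le
    have htime : ∀ᶠ m in atTop, s < (S m).t + (S m).L ^ p := by
      have h2 : Tendsto (fun m => (S m).t + (S m).L ^ p) atTop (nhds (R.t + R.L ^ p)) := by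
        simp only [ht]
        exact tendsto_const_nhds.add hLp_t
      exact h2.eventually_const_lt (by linarith [hs2])
    have htime2 : ∀ᶠ m in atTop, (S m).t + γ * (S m).L ^ p < s := by
      apply Filter.Eventually.of_forall
      intro m
      rw [ht m]
      have h3 : γ * (S m).L ^ p ≤ γ * R.L ^ p :=
        mul_le_mul_of_nonneg_left (hLp_le m) hγ0
      linarith [hs1]
    filter_upwards [hbase, htime, htime2] with m h1 h2 h3
    exact ⟨h1, h3, h2⟩
  have hmemL : ∀ z ∈ R.oLower p γ, ∀ᶠ m in atTop, z ∈ (S m).lower p γ := by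
    rintro ⟨y, s⟩ hz
    obtain ⟨hy, hs⟩ := hz
    obtain ⟨hs1, hs2⟩ := hs
    have hbase : ∀ᶠ m in atTop, ∀ i, |y i - (S m).x i| ≤ (S m).L := by
      rw [eventually_all]
      intro i
      have h2 := hy i (mem_univ i)
      rw [mem_Ioo] at h2
      have h1 : |y i - R.x i| < R.L := by
        rw [abs_lt]; constructor <;> linarith [h2.1, h2.2]
      filter_upwards [hLt.eventually_const_lt h1] with m hm
      rw [hx m]
      exact hm.le
    have htime : ∀ᶠ m in atTop, (S m).t - (S m).L ^ p < s := by
      have h2 : Tendsto (fun m => (S m).t - (S m).L ^ p) atTop (nhds (R.t - R.L ^ p)) := by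
        simp only [ht]
        exact tendsto_const_nhds.sub hLp_t
      exact h2.eventually_lt_const (by linarith [hs1])
    have htime2 : ∀ᶠ m in atTop, s < (S m).t - γ * (S m).L ^ p := by
      apply Filter.Eventually.of_forall
      intro m
      rw [ht m]
      have h3 : γ * (S m).L ^ p ≤ γ * R.L ^ p :=
        mul_le_mul_of_nonneg_left (hLp_le m) hγ0
      linarith [hs2]
    filter_upwards [hbase, htime, htime2] with m h1 h2 h3
    exact ⟨h1, h2, h3⟩
  have hcore : ∀ (φ : ℕ → ℕ), Tendsto φ atTop atTop →
      ∀ (H1 H2 : (Fin n → ℝ) × ℝ → ℝ≥0∞), Measurable H1 → Measurable H2 →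
      (∀ z ∈ R.oUpper p γ, Tendsto (fun j => ENNReal.ofReal (posPart' (f z - c (φ j)) ^ r))
        atTop (nhds (H1 z))) →
      (∀ z ∈ R.oLower p γ, Tendsto (fun j => ENNReal.ofReal (posPart' (c (φ j) - f z) ^ r))
        atTop (nhds (H2 z))) →
      w1 * (∫⁻ z in R.oUpper p γ, H1 z) + w2 * (∫⁻ z in R.oLower p γ, H2 z) ≤ B' := by
    intro φ hφ H1 H2 hH1m hH2m hH1 hH2
    have hmf := master_fatou volume w1 w2 hw1t hw2t (R.oUpper p γ) (R.oLower p γ)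
      (R.measurableSet_oUpper p γ) (R.measurableSet_oLower p γ)
      (fun j => (S (φ j)).upper p γ) (fun j => (S (φ j)).lower p γ)
      (fun j => (S (φ j)).measurableSet_upper p γ)
      (fun j => (S (φ j)).measurableSet_lower p γ)
      (fun j z => ENNReal.ofReal (posPart' (f z - c (φ j)) ^ r))
      (fun j z => ENNReal.ofReal (posPart' (c (φ j) - f z) ^ r))
      (fun j => hmeas1 _) (fun j => hmeas2 _) H1 H2
      (fun z hz => ⟨hφ.eventually (hmemU z hz), hH1 z hz⟩)
      (fun z hz => ⟨hφ.eventually (hmemL z hz), hH2 z hz⟩)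
    have hLHS : (∫⁻ z, (w1 * (R.oUpper p γ).indicator H1 z
        + w2 * (R.oLower p γ).indicator H2 z))
        = w1 * (∫⁻ z in R.oUpper p γ, H1 z) + w2 * (∫⁻ z in R.oLower p γ, H2 z) := by
      rw [lintegral_add_left ((hH1m.indicator (R.measurableSet_oUpper p γ)).const_mul w1),
        lintegral_const_mul w1 (hH1m.indicator (R.measurableSet_oUpper p γ)),
        lintegral_const_mul w2 (hH2m.indicator (R.measurableSet_oLower p γ)),
        lintegral_indicator (R.measurableSet_oUpper p γ) _,
        lintegral_indicator (R.measurableSet_oLower p γ) _]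
    rw [← hLHS]
    refine hmf.trans ?_
    exact Filter.liminf_le_of_frequently_le (Filter.Frequently.of_forall (fun j => hJ (φ j)))
  have hfinal : osc p γ r f R ≤ B' := by
    by_cases hbdd : Bornology.IsBounded (Set.range c)
    · obtain ⟨cstar, -, φ, hφmono, hφt⟩ :=
        tendsto_subseq_of_bounded hbdd (fun m => Set.mem_range_self m)
      have ht1 : ∀ z ∈ R.oUpper p γ,
          Tendsto (fun j => ENNReal.ofReal (posPart' (f z - c (φ j)) ^ r)) atTop
            (nhds (ENNReal.ofReal (posPart' (f z - cstar) ^ r))) := by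
        intro z _
        apply ENNReal.tendsto_ofReal
        simp only [posPart']
        exact ((tendsto_const_nhds.sub hφt).max tendsto_const_nhds).rpow_const (Or.inr hr.le)
      have ht2 : ∀ z ∈ R.oLower p γ,
          Tendsto (fun j => ENNReal.ofReal (posPart' (c (φ j) - f z) ^ r)) atTop
            (nhds (ENNReal.ofReal (posPart' (cstar - f z) ^ r))) := by
        intro z _
        apply ENNReal.tendsto_ofReal
        simp only [posPart']
        exact ((hφt.sub tendsto_const_nhds).max tendsto_const_nhds).rpow_const (Or.inr hr.le)
      have h1 := hcore φ hφmono.tendsto_atTop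
        (fun z => ENNReal.ofReal (posPart' (f z - cstar) ^ r))
        (fun z => ENNReal.ofReal (posPart' (cstar - f z) ^ r))
        (hmeas1 cstar) (hmeas2 cstar) ht1 ht2
      calc osc p γ r f R
          ≤ (∫⁻ z in R.upper p γ, ENNReal.ofReal (posPart' (f z - cstar) ^ r))
              / volume (R.upper p γ)
            + (∫⁻ z in R.lower p γ, ENNReal.ofReal (posPart' (cstar - f z) ^ r))
              / volume (R.lower p γ) := iInf_le _ cstar
        _ = w1 * (∫⁻ z in R.oUpper p γ, ENNReal.ofReal (posPart' (f z - cstar) ^ r))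
            + w2 * (∫⁻ z in R.oLower p γ, ENNReal.ofReal (posPart' (cstar - f z) ^ r)) := by
            rw [setLIntegral_congr (R.upper_ae_oUpper p γ),
              setLIntegral_congr (R.lower_ae_oLower p γ),
              ENNReal.div_eq_inv_mul, ENNReal.div_eq_inv_mul]
        _ ≤ B' := h1
    · rw [isBounded_iff_forall_norm_le] at hbdd
      push_neg at hbdd
      by_cases hup : ∀ K : ℝ, ∃ m, K < c m
      · have hfreq : ∀ j : ℕ, ∃ᶠ m in atTop, (j:ℝ) < c m := by
          intro j
          rw [Filter.frequently_atTop]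
          intro N
          obtain ⟨m, hm⟩ := hup ((j:ℝ) ⊔ ∑ i ∈ Finset.range N, |c i|)
          refine ⟨m, ?_, lt_of_le_of_lt le_sup_left hm⟩
          by_contra hmN
          push_neg at hmN
          have h5 : c m ≤ ∑ i ∈ Finset.range N, |c i| :=
            le_trans (le_abs_self _)
              (Finset.single_le_sum (fun i _ => abs_nonneg (c i)) (Finset.mem_range.mpr hmN))
          have h6 : (j:ℝ) ⊔ ∑ i ∈ Finset.range N, |c i| < c m := hm
          have h7 : ∑ i ∈ Finset.range N, |c i| ≤ (j:ℝ) ⊔ ∑ i ∈ Finset.range N, |c i| :=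
            le_sup_right
          linarith
        obtain ⟨φ, hφmono, hφP⟩ := Filter.extraction_forall_of_frequently hfreq
        have hφct : Tendsto (fun j => c (φ j)) atTop atTop :=
          tendsto_atTop_mono (fun j => (hφP j).le) tendsto_natCast_atTop_atTop
        have ht1 : ∀ z ∈ R.oUpper p γ,
            Tendsto (fun j => ENNReal.ofReal (posPart' (f z - c (φ j)) ^ r)) atTop
              (nhds ((fun _ => (0:ℝ≥0∞)) z)) := by
          intro z _
          have hev : ∀ᶠ j in atTop, (0:ℝ≥0∞) = ENNReal.ofReal (posPart' (f z - c (φ j)) ^ r) := by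
            filter_upwards [hφct.eventually_ge_atTop (f z)] with j hj
            have h5 : posPart' (f z - c (φ j)) = 0 := max_eq_right (by linarith)
            rw [h5, Real.zero_rpow hr.ne', ENNReal.ofReal_zero]
          exact Tendsto.congr' hev tendsto_const_nhds
        have ht2 : ∀ z ∈ R.oLower p γ,
            Tendsto (fun j => ENNReal.ofReal (posPart' (c (φ j) - f z) ^ r)) atTop
              (nhds ((fun _ => (⊤:ℝ≥0∞)) z)) := by
          intro z _
          have h1 : Tendsto (fun j => c (φ j) - f z) atTop atTop := by
            simpa [sub_eq_add_neg] using tendsto_atTop_add_const_right atTop (-(f z)) hφct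
          have h2 : Tendsto (fun j => posPart' (c (φ j) - f z)) atTop atTop :=
            tendsto_atTop_mono (fun j => le_max_left _ _) h1
          exact ENNReal.tendsto_ofReal_atTop.comp ((tendsto_rpow_atTop hr).comp h2)
        have h1 := hcore φ hφmono.tendsto_atTop _ _ measurable_const measurable_const ht1 ht2
        exfalso
        apply hB't
        rw [eq_top_iff]
        refine le_trans ?_ h1
        have h2 : (∫⁻ _ in R.oLower p γ, (⊤:ℝ≥0∞)) = ⊤ := by
          rw [setLIntegral_const, ENNReal.top_mul (R.volume_oLower_pos p γ hγ1).ne']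
        rw [h2, ENNReal.mul_top hw2_0]
        exact le_add_self
      · by_cases hdown : ∀ K : ℝ, ∃ m, c m < K
        · have hfreq : ∀ j : ℕ, ∃ᶠ m in atTop, c m < -(j:ℝ) := by
            intro j
            rw [Filter.frequently_atTop]
            intro N
            obtain ⟨m, hm⟩ := hdown ((-(j:ℝ)) ⊓ (- ∑ i ∈ Finset.range N, |c i|))
            refine ⟨m, ?_, lt_of_lt_of_le hm inf_le_left⟩
            by_contra hmN
            push_neg at hmN
            have h5 : -(∑ i ∈ Finset.range N, |c i|) ≤ c m := by
              have := le_trans (le_abs_self _)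
                (Finset.single_le_sum (fun i _ => abs_nonneg (c i)) (Finset.mem_range.mpr hmN))
              have h6 := neg_abs_le (c m)
              have h7 : |c m| ≤ ∑ i ∈ Finset.range N, |c i| :=
                Finset.single_le_sum (fun i _ => abs_nonneg (c i)) (Finset.mem_range.mpr hmN)
              linarith
            have h8 : (-(j:ℝ)) ⊓ (- ∑ i ∈ Finset.range N, |c i|) ≤ - ∑ i ∈ Finset.range N, |c i| :=
              inf_le_right
            linarith
          obtain ⟨φ, hφmono, hφP⟩ := Filter.extraction_forall_of_frequently hfreq
          have hφct : Tendsto (fun j => c (φ j)) atTop atBot := by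
            apply tendsto_atBot_mono (fun j => (hφP j).le)
            exact tendsto_neg_atTop_atBot.comp tendsto_natCast_atTop_atTop
          have ht1 : ∀ z ∈ R.oUpper p γ,
              Tendsto (fun j => ENNReal.ofReal (posPart' (f z - c (φ j)) ^ r)) atTop
                (nhds ((fun _ => (⊤:ℝ≥0∞)) z)) := by
            intro z _
            have h0 : Tendsto (fun j => -(c (φ j))) atTop atTop :=
              tendsto_neg_atBot_atTop.comp hφct
            have h1 : Tendsto (fun j => f z - c (φ j)) atTop atTop := by
              simpa [sub_eq_add_neg] using tendsto_atTop_add_const_left atTop (f z) h0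
            have h2 : Tendsto (fun j => posPart' (f z - c (φ j))) atTop atTop :=
              tendsto_atTop_mono (fun j => le_max_left _ _) h1
            exact ENNReal.tendsto_ofReal_atTop.comp ((tendsto_rpow_atTop hr).comp h2)
          have ht2 : ∀ z ∈ R.oLower p γ,
              Tendsto (fun j => ENNReal.ofReal (posPart' (c (φ j) - f z) ^ r)) atTop
                (nhds ((fun _ => (0:ℝ≥0∞)) z)) := by
            intro z _
            have hev : ∀ᶠ j in atTop,
                (0:ℝ≥0∞) = ENNReal.ofReal (posPart' (c (φ j) - f z) ^ r) := by
              filter_upwards [hφct.eventually_le_atBot (f z)] with j hj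
              have h5 : posPart' (c (φ j) - f z) = 0 := max_eq_right (by linarith)
              rw [h5, Real.zero_rpow hr.ne', ENNReal.ofReal_zero]
            exact Tendsto.congr' hev tendsto_const_nhds
          have h1 := hcore φ hφmono.tendsto_atTop _ _ measurable_const measurable_const ht1 ht2
          exfalso
          apply hB't
          rw [eq_top_iff]
          refine le_trans ?_ h1
          have h2 : (∫⁻ _ in R.oUpper p γ, (⊤:ℝ≥0∞)) = ⊤ := by
            rw [setLIntegral_const, ENNReal.top_mul (R.volume_oUpper_pos p γ hγ1).ne']
          rw [h2, ENNReal.mul_top hw1_0]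
          exact le_self_add
        · push_neg at hup hdown
          obtain ⟨K1, hK1⟩ := hup
          obtain ⟨K2, hK2⟩ := hdown
          obtain ⟨xx, hxmem, hxx⟩ := hbdd (|K1| + |K2|)
          obtain ⟨m, rfl⟩ := hxmem
          rw [Real.norm_eq_abs] at hxx
          have h5 : |c m| ≤ |K1| + |K2| := by
            rw [abs_le]
            constructor
            · have := hK2 m
              have := neg_abs_le K2
              have := abs_nonneg K1
              linarith
            · have := hK1 m
              have := le_abs_self K1
              have := abs_nonneg K2
              linarith
          linarith
  exact absurd hfinal (not_le.mpr hB2)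

set_option maxHeartbeats 2000000 in
/-- `lim_{q→∞} ‖f‖_{PJN⁺_{q,γ,r}(Ω_T)} = ‖f‖_{PBMO⁺_{γ,r}(Ω_T)}` (in `[0,∞]`)
on a space-time cylinder of finite positive measure. -/
theorem pjn_tendsto_pbmo (n : ℕ) (p γ r : ℝ) (hp : 1 < p) (hγ0 : 0 ≤ γ) (hγ1 : γ < 1)
    (hr : 0 < r) (Ω : Set (Fin n → ℝ)) (T : ℝ) (hT : 0 < T)
    (h0 : 0 < volume (Ω ×ˢ Ioo (0 : ℝ) T)) (h1 : volume (Ω ×ˢ Ioo (0 : ℝ) T) < ⊤)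
    (f : (Fin n → ℝ) × ℝ → ℝ) (hf : Measurable f)
    (hloc : ∀ R : ParRect n, R.rect p ⊆ Ω ×ˢ Ioo (0 : ℝ) T →
      ∫⁻ z in R.rect p, ENNReal.ofReal (|f z| ^ r) < ⊤) :
    Filter.Tendsto (fun q : ℝ => pjn p q γ r f (Ω ×ˢ Ioo (0 : ℝ) T)) Filter.atTop
      (nhds (pbmo p γ r f (Ω ×ˢ Ioo (0 : ℝ) T))) := by
  have hp0 : (0:ℝ) < p := lt_trans one_pos hp
  set ΩT := Ω ×ˢ Ioo (0:ℝ) T with hΩT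
  set M := pbmo p γ r f ΩT with hM
  -- generic rpow limit
  have hrpow_lim : ∀ v : ℝ≥0∞, v ≠ 0 → v ≠ ⊤ →
      Tendsto (fun q : ℝ => v ^ (1/q)) atTop (nhds 1) := by
    intro v hv0 hvt
    have h1' : Tendsto (fun q : ℝ => 1/q) atTop (nhds 0) := by
      simpa [one_div] using tendsto_inv_atTop_zero
    have hvr : 0 < v.toReal := ENNReal.toReal_pos hv0 hvt
    have hcont : Tendsto (fun q : ℝ => (v.toReal) ^ (1/q)) atTop (nhds 1) := by
      have h2 := (Real.continuousAt_const_rpow (b := (0:ℝ)) hvr.ne').tendsto.comp h1'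
      simpa [Real.rpow_zero, Function.comp_def] using h2
    have h2 := ENNReal.tendsto_ofReal hcont
    rw [ENNReal.ofReal_one] at h2
    refine h2.congr fun q => ?_
    rw [← ENNReal.ofReal_rpow_of_pos hvr, ENNReal.ofReal_toReal hvt]
  -- upper bound
  have hub : ∀ q : ℝ, 1 ≤ q → pjn p q γ r f ΩT ≤ (volume ΩT) ^ (1/q) * M := by
    intro q hq
    have hq0 : (0:ℝ) < q := by linarith
    have hQ : pjnQ p q γ r f ΩT ≤ volume ΩT * M ^ q := by
      rw [pjnQ]
      refine iSup_le fun Rs => iSup_le fun hsub => iSup_le fun hdisj => ?_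
      have hterm : ∀ i, volume ((Rs i).upper p γ) * osc p γ r f (Rs i) ^ (q/r)
          ≤ volume ((Rs i).upper p γ) * M ^ q := by
        intro i
        apply mul_le_mul_right
        have harith : (1:ℝ)/r * q = q/r := by rw [one_div, inv_mul_eq_div]
        rw [← harith, ENNReal.rpow_mul]
        apply ENNReal.rpow_le_rpow _ hq0.le
        rw [hM, pbmo]
        exact le_iSup_of_le (Rs i) (le_iSup_of_le (hsub i) le_rfl)
      calc (∑' i, volume ((Rs i).upper p γ) * osc p γ r f (Rs i) ^ (q/r))
          ≤ ∑' i, volume ((Rs i).upper p γ) * M ^ q := ENNReal.tsum_le_tsum hterm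
        _ = (∑' i, volume ((Rs i).upper p γ)) * M ^ q := ENNReal.tsum_mul_right
        _ ≤ volume ΩT * M ^ q := by
            apply mul_le_mul_left
            have hdU : Pairwise (Function.onFun Disjoint fun i => (Rs i).upper p γ) :=
              fun i j hij => ((hdisj hij).mono ((Rs i).upper_subset_rect p γ hγ0)
                ((Rs j).upper_subset_rect p γ hγ0))
            rw [← measure_iUnion hdU (fun i => (Rs i).measurableSet_upper p γ)]
            exact measure_mono (Set.iUnion_subset fun i =>
              ((Rs i).upper_subset_rect p γ hγ0).trans (hsub i))
    calc pjn p q γ r f ΩT = pjnQ p q γ r f ΩT ^ (1/q) := rfl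
      _ ≤ (volume ΩT * M ^ q) ^ (1/q) := ENNReal.rpow_le_rpow hQ (by positivity)
      _ = volume ΩT ^ (1/q) * M := by
          rw [ENNReal.mul_rpow_of_nonneg _ _ (by positivity), ← ENNReal.rpow_mul,
            mul_one_div, div_self hq0.ne', ENNReal.rpow_one]
  have hVlim : Tendsto (fun q : ℝ => volume ΩT ^ (1/q) * M) atTop (nhds M) := by
    have h2 := ENNReal.Tendsto.mul_const (hrpow_lim (volume ΩT) h0.ne' h1.ne)
      (Or.inl one_ne_zero) (b := M)
    simpa using h2
  have hlimsup : limsup (fun q => pjn p q γ r f ΩT) atTop ≤ M := by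
    calc limsup (fun q => pjn p q γ r f ΩT) atTop
        ≤ limsup (fun q : ℝ => volume ΩT ^ (1/q) * M) atTop :=
          limsup_le_limsup ((eventually_ge_atTop (1:ℝ)).mono fun q hq => hub q hq)
      _ = M := hVlim.limsup_eq
  -- lower bound
  have hliminf : M ≤ liminf (fun q => pjn p q γ r f ΩT) atTop := by
    rw [hM, pbmo]
    refine iSup_le fun R => iSup_le fun hR => ?_
    set S : ℕ → ParRect n := fun m => ⟨R.x, R.t, (1 - 1/((m:ℝ)+2)) * R.L, by
      have h2 : (0:ℝ) < (m:ℝ) + 2 := by positivity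
      have h3 : 1/((m:ℝ)+2) < 1 := by
        rw [div_lt_one h2]
        linarith [Nat.cast_nonneg (α := ℝ) m]
      nlinarith [R.hL]⟩ with hS
    have hxS : ∀ m, (S m).x = R.x := fun m => rfl
    have htS : ∀ m, (S m).t = R.t := fun m => rfl
    have hLlt : ∀ m, (S m).L < R.L := by
      intro m
      show (1 - 1/((m:ℝ)+2)) * R.L < R.L
      have h2 : (0:ℝ) < (m:ℝ) + 2 := by positivity
      have h3 : 0 < 1/((m:ℝ)+2) := by positivity
      nlinarith [R.hL]
    have hLt : Tendsto (fun m => (S m).L) atTop (nhds R.L) := by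
      have ha : Tendsto (fun m : ℕ => ((m:ℝ)+2)) atTop atTop :=
        tendsto_atTop_add_const_right _ _ tendsto_natCast_atTop_atTop
      have hb : Tendsto (fun m : ℕ => 1/((m:ℝ)+2)) atTop (nhds 0) := by
        simpa [one_div, Pi.inv_def] using ha.inv_tendsto_atTop
      have hcℕ : Tendsto (fun m : ℕ => (1 - 1/((m:ℝ)+2)) * R.L) atTop
          (nhds ((1 - 0) * R.L)) := (tendsto_const_nhds.sub hb).mul_const _
      simp only [sub_zero, one_mul] at hcℕ
      exact hcℕ
    have hkey : ∀ m, osc p γ r f (S m) ^ (1/r)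
        ≤ liminf (fun q => pjn p q γ r f ΩT) atTop := by
      intro m
      have hv0 : volume ((S m).upper p γ) ≠ 0 := ((S m).volume_upper_pos p γ hγ1).ne'
      have hvt : volume ((S m).upper p γ) ≠ ⊤ := (S m).volume_upper_ne_top p γ
      have hev : ∀ᶠ q : ℝ in atTop,
          volume ((S m).upper p γ) ^ (1/q) * osc p γ r f (S m) ^ (1/r)
            ≤ pjn p q γ r f ΩT := by
        filter_upwards [eventually_ge_atTop (1:ℝ)] with q hq
        have hq0 : (0:ℝ) < q := by linarith
        have hqne : q ≠ 0 := hq0.ne'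
        have hrne : r ≠ 0 := hr.ne'
        have h := single_le_pjnQ (S := S m) (R := R) q γ r hp0 f rfl rfl (hLlt m) hR
        have harith : q / r * (1/q) = 1/r := by field_simp
        calc volume ((S m).upper p γ) ^ (1/q) * osc p γ r f (S m) ^ (1/r)
            = (volume ((S m).upper p γ) * osc p γ r f (S m) ^ (q/r)) ^ (1/q) := by
              rw [ENNReal.mul_rpow_of_nonneg _ _ (by positivity), ← ENNReal.rpow_mul, harith]
          _ ≤ pjnQ p q γ r f ΩT ^ (1/q) := ENNReal.rpow_le_rpow h (by positivity)
          _ = pjn p q γ r f ΩT := rfl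
      have hlim2 : Tendsto (fun q : ℝ =>
          volume ((S m).upper p γ) ^ (1/q) * osc p γ r f (S m) ^ (1/r)) atTop
          (nhds (osc p γ r f (S m) ^ (1/r))) := by
        have h2 := ENNReal.Tendsto.mul_const (hrpow_lim _ hv0 hvt) (Or.inl one_ne_zero)
          (b := osc p γ r f (S m) ^ (1/r))
        simpa using h2
      calc osc p γ r f (S m) ^ (1/r)
          = liminf (fun q : ℝ =>
              volume ((S m).upper p γ) ^ (1/q) * osc p γ r f (S m) ^ (1/r)) atTop :=
            hlim2.liminf_eq.symm
        _ ≤ liminf (fun q => pjn p q γ r f ΩT) atTop := liminf_le_liminf hev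
    have hosc := osc_le_iSup_shrink hp hγ0 hγ1 hr f hf R S hxS htS (fun m => (hLlt m).le) hLt
    have hB : (⨆ m, osc p γ r f (S m)) ≤ (liminf (fun q => pjn p q γ r f ΩT) atTop) ^ r := by
      refine iSup_le fun m => ?_
      have h5 : osc p γ r f (S m) = (osc p γ r f (S m) ^ ((1:ℝ)/r)) ^ r := by
        rw [← ENNReal.rpow_mul, one_div, inv_mul_cancel₀ hr.ne', ENNReal.rpow_one]
      rw [h5]
      exact ENNReal.rpow_le_rpow (hkey m) hr.le
    calc osc p γ r f R ^ (1/r)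
        ≤ ((liminf (fun q => pjn p q γ r f ΩT) atTop) ^ r) ^ ((1:ℝ)/r) :=
          ENNReal.rpow_le_rpow (hosc.trans hB) (by positivity)
      _ = liminf (fun q => pjn p q γ r f ΩT) atTop := by
          rw [← ENNReal.rpow_mul, mul_one_div, div_self hr.ne', ENNReal.rpow_one]
  have hle : liminf (fun q => pjn p q γ r f ΩT) atTop
      ≤ limsup (fun q => pjn p q γ r f ΩT) atTop := liminf_le_limsup
  have hli : liminf (fun q => pjn p q γ r f ΩT) atTop = M :=
    le_antisymm (hle.trans hlimsup) hliminf
  have hls : limsup (fun q => pjn p q γ r f ΩT) atTop = M :=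
    le_antisymm hlimsup (hliminf.trans hle)
  exact tendsto_of_liminf_eq_limsup hli hls

end
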